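/- For fixed k ∈ [0,1), the function G_6(ρ) = (2ρ^4 + 3ρ^3 + ρ^2 + 3ρ - 1)/((1+ρ)^2(1-ρ)) + 2k(ρ/(1-ρ) + log(1-ρ)) satisfies G_6(0) = -1 < 0, G_6(1/3) > 0, and G_6'(ρ) ≥ 0 on [0, 1/3]; hence G_6 has a unique root in (0, 1/3). -/

import Mathlib

open Real Set

private lemma G6_hasDeriv (k ρ : ℝ) (h1 : -1 < ρ) (h2 : ρ < 1) :
    HasDerivAt (fun ρ : ℝ =>
      (2 * ρ ^ 4 + 3 * ρ ^ 3 + ρ ^ 2 + 3 * ρ - 1) / ((1 + ρ) ^ 2 * (1 - ρ))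
        + 2 * k * (ρ / (1 - ρ) + Real.log (1 - ρ)))
      ((-2*ρ^6 - 4*ρ^5 + 4*ρ^4 + 20*ρ^3 + 10*ρ^2 + 4) / ((1 + ρ) ^ 2 * (1 - ρ))^2
        + 2 * k * (ρ / (1 - ρ)^2)) ρ := by
  have hne1 : (1:ℝ) + ρ ≠ 0 := by linarith
  have hne2 : (1:ℝ) - ρ ≠ 0 := by linarith
  have hQne : ((1 + ρ) ^ 2 * (1 - ρ)) ≠ 0 := mul_ne_zero (pow_ne_zero _ hne1) hne2
  have hP : HasDerivAt (fun x : ℝ => 2 * x ^ 4 + 3 * x ^ 3 + x ^ 2 + 3 * x - 1)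
      (8*ρ^3 + 9*ρ^2 + 2*ρ + 3) ρ := by
    have h := (((((hasDerivAt_pow 4 ρ).const_mul 2).add
      ((hasDerivAt_pow 3 ρ).const_mul 3)).add (hasDerivAt_pow 2 ρ)).add
      ((hasDerivAt_id ρ).const_mul 3)).sub_const 1
    refine h.congr_deriv ?_
    push_cast; ring
  have ha : HasDerivAt (fun x : ℝ => (1 + x) ^ 2) (2 * (1 + ρ)) ρ := by
    have h := ((hasDerivAt_id ρ).const_add 1).pow 2
    refine h.congr_deriv ?_
    simp
  have hb : HasDerivAt (fun x : ℝ => 1 - x) (-1) ρ := by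
    simpa using (hasDerivAt_id ρ).const_sub 1
  have hQ : HasDerivAt (fun x : ℝ => (1 + x) ^ 2 * (1 - x))
      (2 * (1 + ρ) * (1 - ρ) + (1 + ρ) ^ 2 * (-1)) ρ := ha.mul hb
  have hdiv := hP.div hQ hQne
  have hc : HasDerivAt (fun x : ℝ => x / (1 - x))
      ((1 * (1 - ρ) - ρ * (-1)) / (1 - ρ) ^ 2) ρ := (hasDerivAt_id ρ).div hb hne2
  have hd : HasDerivAt (fun x : ℝ => Real.log (1 - x)) (-1 / (1 - ρ)) ρ := hb.log hne2
  have he := (hc.add hd).const_mul (2 * k)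
  have htot := hdiv.add he
  refine htot.congr_deriv ?_
  have hs : ((1:ℝ) - ρ) ^ 2 ≠ 0 := pow_ne_zero _ hne2
  field_simp
  ring

theorem G6_root (k : ℝ) (hk0 : 0 ≤ k) (hk1 : k < 1) :
    (fun ρ : ℝ => (2 * ρ ^ 4 + 3 * ρ ^ 3 + ρ ^ 2 + 3 * ρ - 1) / ((1 + ρ) ^ 2 * (1 - ρ))
        + 2 * k * (ρ / (1 - ρ) + Real.log (1 - ρ))) 0 = -1 ∧
    0 < (fun ρ : ℝ => (2 * ρ ^ 4 + 3 * ρ ^ 3 + ρ ^ 2 + 3 * ρ - 1) / ((1 + ρ) ^ 2 * (1 - ρ))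
        + 2 * k * (ρ / (1 - ρ) + Real.log (1 - ρ))) (1 / 3) ∧
    (∀ ρ ∈ Set.Icc (0:ℝ) (1 / 3),
      0 ≤ deriv (fun ρ : ℝ =>
        (2 * ρ ^ 4 + 3 * ρ ^ 3 + ρ ^ 2 + 3 * ρ - 1) / ((1 + ρ) ^ 2 * (1 - ρ))
          + 2 * k * (ρ / (1 - ρ) + Real.log (1 - ρ))) ρ) ∧
    (∃! ρ₀ : ℝ, ρ₀ ∈ Set.Ioo 0 (1 / 3) ∧
      (2 * ρ₀ ^ 4 + 3 * ρ₀ ^ 3 + ρ₀ ^ 2 + 3 * ρ₀ - 1) / ((1 + ρ₀) ^ 2 * (1 - ρ₀))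
        + 2 * k * (ρ₀ / (1 - ρ₀) + Real.log (1 - ρ₀)) = 0) := by
  set f : ℝ → ℝ := fun ρ : ℝ =>
      (2 * ρ ^ 4 + 3 * ρ ^ 3 + ρ ^ 2 + 3 * ρ - 1) / ((1 + ρ) ^ 2 * (1 - ρ))
        + 2 * k * (ρ / (1 - ρ) + Real.log (1 - ρ)) with hf
  -- derivative positivity on [0, 1/3]
  have hDpos : ∀ ρ : ℝ, 0 ≤ ρ → ρ ≤ 1/3 →
      0 < (-2*ρ^6 - 4*ρ^5 + 4*ρ^4 + 20*ρ^3 + 10*ρ^2 + 4) / ((1 + ρ) ^ 2 * (1 - ρ))^2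
        + 2 * k * (ρ / (1 - ρ)^2) := by
    intro ρ hρ0 hρ1
    have h1p : (0:ℝ) < 1 + ρ := by linarith
    have h1m : (0:ℝ) < 1 - ρ := by linarith
    have hQ2 : (0:ℝ) < ((1 + ρ) ^ 2 * (1 - ρ))^2 := pow_pos (mul_pos (pow_pos h1p 2) h1m) 2
    have hN : (0:ℝ) < -2*ρ^6 - 4*ρ^5 + 4*ρ^4 + 20*ρ^3 + 10*ρ^2 + 4 := by nlinarith [pow_nonneg hρ0 2, pow_nonneg hρ0 3, pow_nonneg hρ0 4, pow_nonneg hρ0 5, pow_nonneg hρ0 6]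
    have h2 : 0 ≤ 2 * k * (ρ / (1 - ρ)^2) := by positivity
    have := div_pos hN hQ2
    linarith
  have hderiv : ∀ ρ ∈ Set.Icc (0:ℝ) (1/3), deriv f ρ =
      (-2*ρ^6 - 4*ρ^5 + 4*ρ^4 + 20*ρ^3 + 10*ρ^2 + 4) / ((1 + ρ) ^ 2 * (1 - ρ))^2
        + 2 * k * (ρ / (1 - ρ)^2) := by
    intro ρ hρ
    exact (G6_hasDeriv k ρ (by linarith [hρ.1]) (by linarith [hρ.2])).deriv
  -- continuity
  have hcont : ContinuousOn f (Set.Icc 0 (1/3)) := fun x hx =>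
    (G6_hasDeriv k x (by linarith [hx.1]) (by linarith [hx.2])).continuousAt.continuousWithinAt
  -- strict monotonicity
  have hmono : StrictMonoOn f (Set.Icc 0 (1/3)) := by
    apply strictMonoOn_of_deriv_pos (convex_Icc _ _) hcont
    intro x hx
    rw [interior_Icc] at hx
    rw [hderiv x ⟨le_of_lt hx.1, le_of_lt hx.2⟩]
    exact hDpos x (le_of_lt hx.1) (le_of_lt hx.2)
  -- f 0 = -1
  have hf0 : f 0 = -1 := by
    simp [hf, Real.log_one]
  -- f (1/3) > 0
  have hlog : Real.log (1 - 1/3) > -(1/2 : ℝ) := by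
    have h32 : Real.log (3/2 : ℝ) < 1/2 := by
      have := Real.log_lt_sub_one_of_pos (show (0:ℝ) < 3/2 by norm_num) (by norm_num)
      linarith
    have : (1 : ℝ) - 1/3 = (3/2 : ℝ)⁻¹ := by norm_num
    rw [this, Real.log_inv]
    linarith
  have hf13 : 0 < f (1/3) := by
    have hterm : (0:ℝ) ≤ 2 * k * ((1/3) / (1 - 1/3) + Real.log (1 - 1/3)) := by
      have : (0:ℝ) ≤ (1/3) / (1 - 1/3) + Real.log (1 - 1/3) := by
        have : ((1:ℝ)/3) / (1 - 1/3) = 1/2 := by norm_num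
        rw [this]; linarith
      positivity
    have hrat : (2 * (1/3:ℝ) ^ 4 + 3 * (1/3) ^ 3 + (1/3) ^ 2 + 3 * (1/3) - 1)
        / ((1 + 1/3) ^ 2 * (1 - 1/3)) = 5/24 := by norm_num
    show 0 < (2 * (1/3:ℝ) ^ 4 + 3 * (1/3) ^ 3 + (1/3) ^ 2 + 3 * (1/3) - 1)
        / ((1 + 1/3) ^ 2 * (1 - 1/3)) + 2 * k * ((1/3) / (1 - 1/3) + Real.log (1 - 1/3))
    rw [hrat]
    linarith
  refine ⟨hf0, hf13, ?_, ?_⟩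
  · intro ρ hρ
    rw [hderiv ρ hρ]
    exact le_of_lt (hDpos ρ hρ.1 hρ.2)
  · -- existence via IVT
    have hsub := intermediate_value_Ioo (show (0:ℝ) ≤ 1/3 by norm_num) hcont
    have h0mem : (0:ℝ) ∈ Set.Ioo (f 0) (f (1/3)) := by
      rw [hf0]; exact ⟨by norm_num, hf13⟩
    obtain ⟨ρ₀, hρ₀, hfρ₀⟩ := hsub h0mem
    refine ⟨ρ₀, ⟨hρ₀, hfρ₀⟩, ?_⟩
    intro ρ₁ ⟨hρ₁, hfρ₁⟩
    have hmem₀ : ρ₀ ∈ Set.Icc (0:ℝ) (1/3) := ⟨le_of_lt hρ₀.1, le_of_lt hρ₀.2⟩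
    have hmem₁ : ρ₁ ∈ Set.Icc (0:ℝ) (1/3) := ⟨le_of_lt hρ₁.1, le_of_lt hρ₁.2⟩
    exact hmono.injOn hmem₁ hmem₀ (hfρ₁.trans hfρ₀.symm)
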